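/- Let (c_{00},c_{01},c_{11},c_{12},c_{13},c_{14},c_{23}) and (c'_{00},c'_{01},c'_{11},c'_{12},c'_{13},c'_{14},c'_{23}) be tuples of complex numbers related by the base-change formulas of the isomorphism criterion for TLb_7 with A_0 B_1 ≠ 0, and assume c_{23} ≠ 0, c_{11} ≠ 0, c_{12} ≠ 0. Then (c'_{23}/c'_{11})^8 (4c'_{00}c'_{11} - c'^2_{01})^3 = (c_{23}/c_{11})^8 (4c_{00}c_{11} - c^2_{01})^3 and c'_{12}/c'_{23} = c_{12}/c_{23}. -/

import Mathlib

/-- Invariance of the functions (c₂₃/c₁₁)⁸Δ₁³ and c₁₂/c₂₃ under the adapted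
base change in TLb₇, on the subset c₂₃ ≠ 0, c₁₁ ≠ 0, c₁₂ ≠ 0. -/
theorem TLb7_U1_invariants (A0 A1 B1 B2 B3 : ℂ)
    (c00 c01 c11 c12 c13 c14 c23 c00' c01' c11' c12' c13' c14' c23' : ℂ)
    (hA : A0 * B1 ≠ 0)
    (h00 : c00' = (A0^2 * c00 + A0 * A1 * c01 + A1^2 * c11) / (A0^5 * B1))
    (h01 : c01' = (A0 * c01 + 2 * A1 * c11) / A0^5)
    (h11 : c11' = B1 * c11 / A0^5)
    (h12 : c12' = B1 * c12 / A0^2)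
    (h13 : c13' = (B1 * c13 + B2 * c12) / A0^3)
    (h14 : c14' = (1 / (A0^5 * B1)) *
      (A0 * B1^2 * c14 + B2 * (A0 * B1 * c13 + A1 * B1 * c12 * c23 + A0 * B2 * c23
        - A1 * B1 * c12^2) - B3 * (2 * A0 * B1 * c23 - A0 * B1 * c12)))
    (h23 : c23' = B1 * c23 / A0^2)
    (hc23 : c23 ≠ 0) (hc11 : c11 ≠ 0) (hc12 : c12 ≠ 0) :
    (c23' / c11')^8 * (4 * c00' * c11' - c01'^2)^3
      = (c23 / c11)^8 * (4 * c00 * c11 - c01^2)^3 ∧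
    c12' / c23' = c12 / c23 := by
  have hA0 : A0 ≠ 0 := fun h => hA (by simp [h])
  have hB1 : B1 ≠ 0 := fun h => hA (by simp [h])
  subst h00 h01 h11 h12 h23
  constructor
  · have e1 : B1 * c23 / A0 ^ 2 / (B1 * c11 / A0 ^ 5) = A0 ^ 3 * (c23 / c11) := by
      field_simp
    have e2 : 4 * ((A0 ^ 2 * c00 + A0 * A1 * c01 + A1 ^ 2 * c11) / (A0 ^ 5 * B1))
        * (B1 * c11 / A0 ^ 5) - ((A0 * c01 + 2 * A1 * c11) / A0 ^ 5) ^ 2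
        = (4 * c00 * c11 - c01 ^ 2) / A0 ^ 8 := by
      field_simp; ring_nf
    rw [e1, e2]
    field_simp
  · field_simp
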